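/- Let K ⊂ ℝⁿ be a closed convex set containing the origin in its interior whose recession cone rec(K) is not full-dimensional. Then cl(conv(K̂)) = K*. -/

import Mathlib

open scoped BigOperators Pointwise

noncomputable section

/-- Euclidean space `ℝⁿ`. -/
abbrev E (n : ℕ) := EuclideanSpace ℝ (Fin n)

/-- Dot product on `ℝⁿ`. -/
def dot {n : ℕ} (x y : E n) : ℝ := ∑ i, x i * y i

/-- A point with integral coordinates. -/
def IsIntPt {n : ℕ} (x : E n) : Prop := ∀ i, ∃ m : ℤ, x i = (m : ℝ)

/-- A vector with rational coordinates. -/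
def IsRatVec {n : ℕ} (x : E n) : Prop := ∀ i, ∃ q : ℚ, x i = (q : ℝ)

/-- `S` is the set of integral points of a rational polyhedron `{x | Ax ≤ b}`. -/
def IsIntPtsOfRatPolyhedron {n : ℕ} (S : Set (E n)) : Prop :=
  ∃ (m : ℕ) (A : Fin m → E n) (b : Fin m → ℝ),
    (∀ i, IsRatVec (A i)) ∧ (∀ i, ∃ q : ℚ, b i = (q : ℝ)) ∧
    S = {x | IsIntPt x ∧ ∀ i, dot (A i) x ≤ b i}

/-- `dim S = n`: `S` contains `n+1` affinely independent points. -/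
def FullDimSet {n : ℕ} (S : Set (E n)) : Prop :=
  ∃ p : Fin (n + 1) → E n, (∀ i, p i ∈ S) ∧ AffineIndependent ℝ p

/-- `B` is `S`-free: the interior of `B` contains no point of `S`. -/
def SFree {n : ℕ} (S B : Set (E n)) : Prop := ∀ x ∈ interior B, x ∉ S

/-- `B` is a maximal `S`-free convex set. -/
def MaxSFree {n : ℕ} (S B : Set (E n)) : Prop :=
  Convex ℝ B ∧ SFree S B ∧
    ∀ C : Set (E n), Convex ℝ C → SFree S C → B ⊆ C → B = C

/-- `B` is lattice-free: no integral point in its interior. -/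
def LatticeFree {n : ℕ} (B : Set (E n)) : Prop := ∀ x ∈ interior B, ¬ IsIntPt x

/-- `B` is a maximal lattice-free convex set. -/
def MaxLatticeFree {n : ℕ} (B : Set (E n)) : Prop :=
  Convex ℝ B ∧ LatticeFree B ∧
    ∀ C : Set (E n), Convex ℝ C → LatticeFree C → B ⊆ C → B = C

/-- A polyhedron: finite intersection of closed half-spaces. -/
def IsPolyhedron {n : ℕ} (B : Set (E n)) : Prop :=
  ∃ (m : ℕ) (a : Fin m → E n) (c : Fin m → ℝ), B = {x | ∀ i, dot (a i) x ≤ c i}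

/-- A polytope: convex hull of finitely many points. -/
def IsPolytope {n : ℕ} (P : Set (E n)) : Prop :=
  ∃ V : Finset (E n), P = convexHull ℝ (V : Set (E n))

/-- Dimension of a set: dimension of its affine hull. -/
def sdim {n : ℕ} (A : Set (E n)) : ℕ := Module.finrank ℝ (affineSpan ℝ A).direction

/-- `F` is a face of the convex set `B`. -/
def IsFaceOf {n : ℕ} (F B : Set (E n)) : Prop :=
  F ⊆ B ∧ Convex ℝ F ∧ ∀ x ∈ B, ∀ y ∈ B, ∀ t : ℝ, 0 < t → t < 1 →
    t • x + (1 - t) • y ∈ F → x ∈ F ∧ y ∈ F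

/-- `F` is a facet of `B`: a nonempty face of dimension `dim B - 1`. -/
def IsFacetOf {n : ℕ} (F B : Set (E n)) : Prop :=
  IsFaceOf F B ∧ F.Nonempty ∧ sdim F + 1 = sdim B

/-- Recession cone of `K`. -/
def recCone {n : ℕ} (K : Set (E n)) : Set (E n) :=
  {d | ∀ x ∈ K, ∀ t : ℝ, 0 ≤ t → x + t • d ∈ K}

/-- Lineality space of `K`. -/
def linSpace {n : ℕ} (K : Set (E n)) : Set (E n) :=
  {d | d ∈ recCone K ∧ -d ∈ recCone K}

/-- The set of all finite nonnegative combinations of elements of `G`. -/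
def conicHullOf {n : ℕ} (G : Set (E n)) : Set (E n) :=
  {x | ∃ (m : ℕ) (c : Fin m → ℝ) (v : Fin m → E n),
    (∀ i, 0 ≤ c i) ∧ (∀ i, v i ∈ G) ∧ x = ∑ i, c i • v i}

/-- A cone is rational if it is generated by vectors with rational coordinates. -/
def IsRationalCone {n : ℕ} (C : Set (E n)) : Prop :=
  ∃ G : Set (E n), (∀ v ∈ G, IsRatVec v) ∧ C = conicHullOf G

/-- A linear subspace is rational if it is spanned by rational vectors. -/
def IsRationalSubspace {n : ℕ} (L : Submodule ℝ (E n)) : Prop :=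
  ∃ G : Set (E n), (∀ v ∈ G, IsRatVec v) ∧ L = Submodule.span ℝ G

/-- The hyperplane `{x | a·x = β}` is a supporting hyperplane of `C`. -/
def IsSupportingHyperplane {n : ℕ} (a : E n) (β : ℝ) (C : Set (E n)) : Prop :=
  ((∀ x ∈ C, dot a x ≤ β) ∨ (∀ x ∈ C, β ≤ dot a x)) ∧
    ∃ x ∈ closure C, dot a x = β

/-- `ψ` is a valid function with respect to `f` and `S`. -/
def ValidFn {n : ℕ} (S : Set (E n)) (f : E n) (ψ : E n → ℝ) : Prop :=
  ∀ s : (E n) →₀ ℝ, (∀ r, 0 ≤ s r) →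
    (f + s.sum fun r c => c • r) ∈ S →
    1 ≤ s.sum fun r c => ψ r * c

/-- Sublinear: positively homogeneous and subadditive. -/
def Sublinear {n : ℕ} (ψ : E n → ℝ) : Prop :=
  (∀ t : ℝ, 0 ≤ t → ∀ r, ψ (t • r) = t * ψ r) ∧
  (∀ r r', ψ (r + r') ≤ ψ r + ψ r')

/-- Polar of `K`. -/
def polar {n : ℕ} (K : Set (E n)) : Set (E n) := {y | ∀ r ∈ K, dot y r ≤ 1}

/-- `K̂ = {y ∈ K* | ∃ x ∈ K, x·y = 1}`. -/
def Khat {n : ℕ} (K : Set (E n)) : Set (E n) :=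
  {y | y ∈ polar K ∧ ∃ x ∈ K, dot x y = 1}

/-- `ρ_K(r) = sup { y·r | y ∈ K̂ }`. -/
def rho {n : ℕ} (K : Set (E n)) (r : E n) : ℝ :=
  sSup ((fun y => dot y r) '' Khat K)


open RealInnerProductSpace

private lemma dot_eq_inner' {n : ℕ} (x y : E n) : dot x y = ⟪x, y⟫ := by
  simp [dot, PiLp.inner_apply, RCLike.inner_apply]
  exact Finset.sum_congr rfl fun _ _ => mul_comm _ _

private lemma dot_comm' {n : ℕ} (x y : E n) : dot x y = dot y x := by
  simp [dot, mul_comm]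

private lemma zero_mem_polar' {n : ℕ} (K : Set (E n)) : (0 : E n) ∈ polar K := by
  intro r hr; rw [dot_eq_inner']; simp

private lemma polar_isClosed' {n : ℕ} (K : Set (E n)) : IsClosed (polar K) := by
  have : polar K = ⋂ r ∈ K, {y : E n | ⟪y, r⟫ ≤ 1} := by
    ext y; simp [polar, dot_eq_inner']
  rw [this]
  exact isClosed_biInter fun r _ =>
    isClosed_le (Continuous.inner continuous_id continuous_const) continuous_const

private lemma polar_convex' {n : ℕ} (K : Set (E n)) : Convex ℝ (polar K) := by
  intro y hy z hz a b ha hb hab r hr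
  have h1 := hy r hr
  have h2 := hz r hr
  rw [dot_eq_inner'] at h1 h2 ⊢
  rw [inner_add_left, real_inner_smul_left, real_inner_smul_left]
  nlinarith

private lemma bipolar' {n : ℕ} (K : Set (E n)) (hcl : IsClosed K) (hconv : Convex ℝ K)
    (h0K : (0:E n) ∈ K) : polar (polar K) = K := by
  apply Set.Subset.antisymm
  · intro x hx
    by_contra hxK
    obtain ⟨f, u, hfu, hux⟩ := geometric_hahn_banach_closed_point hconv hcl hxK
    have hu0 : 0 < u := by have := hfu 0 h0K; simpa using this
    set c := (InnerProductSpace.toDual ℝ (E n)).symm f with hc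
    have hcf : ∀ z : E n, ⟪c, z⟫ = f z := fun z => InnerProductSpace.toDual_symm_apply
    have hy : u⁻¹ • c ∈ polar K := by
      intro rr hrr
      rw [dot_eq_inner', real_inner_smul_left, hcf]
      have h1 := (hfu rr hrr).le
      have h2 : (0:ℝ) ≤ u⁻¹ := by positivity
      calc u⁻¹ * f rr ≤ u⁻¹ * u := by nlinarith
        _ = 1 := by field_simp
    have hle := hx _ hy
    rw [dot_eq_inner', real_inner_smul_right, real_inner_comm, hcf] at hle
    have : u⁻¹ * u < u⁻¹ * f x := by
      have h2 : (0:ℝ) < u⁻¹ := by positivity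
      nlinarith
    rw [inv_mul_cancel₀ hu0.ne'] at this
    linarith
  · intro x hx y hy; rw [dot_comm']; exact hy x hx

private lemma ray_mem_recCone' {n : ℕ} {K : Set (E n)} (hcl : IsClosed K) (hconv : Convex ℝ K)
    {v : E n} (h : ∀ t : ℝ, 0 ≤ t → t • v ∈ K) : v ∈ recCone K := by
  intro x hx t ht
  have key : ∀ k : ℕ, (1 - 1/((k:ℝ)+1)) • x + t • v ∈ K := by
    intro k
    have hk0 : (0:ℝ) < (k:ℝ)+1 := by positivity
    have hs : (0:ℝ) < 1/((k:ℝ)+1) := by positivity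
    have hs1 : 1/((k:ℝ)+1) ≤ 1 := by
      rw [div_le_one hk0]; linarith [Nat.cast_nonneg (α := ℝ) k]
    have hmem := hconv hx (h (t * ((k:ℝ)+1)) (by positivity))
      (by linarith : (0:ℝ) ≤ 1 - 1/((k:ℝ)+1)) hs.le (by ring)
    have : (1/((k:ℝ)+1)) • ((t * ((k:ℝ)+1)) • v) = t • v := by
      rw [smul_smul]; congr 1; field_simp
    rwa [this] at hmem
  have hlim : Filter.Tendsto (fun k : ℕ => (1 - 1/((k:ℝ)+1)) • x + t • v)
      Filter.atTop (nhds (x + t • v)) := by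
    have h1 : Filter.Tendsto (fun k : ℕ => 1 - 1/((k:ℝ)+1)) Filter.atTop (nhds 1) := by
      have : Filter.Tendsto (fun k : ℕ => 1/((k:ℝ)+1)) Filter.atTop (nhds 0) :=
        tendsto_one_div_add_atTop_nhds_zero_nat
      have := (tendsto_const_nhds (x := (1:ℝ)) (f := Filter.atTop (α := ℕ))).sub this
      simpa using this
    have h2 := h1.smul_const x
    simpa using h2.add (tendsto_const_nhds (x := t • v))
  exact hcl.mem_of_tendsto hlim (Filter.Eventually.of_forall key)

private lemma polar_bounded' {n : ℕ} {K : Set (E n)} {r : ℝ} (hr : 0 < r)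
    (hball : Metric.ball (0 : E n) r ⊆ K) :
    ∀ y ∈ polar K, ‖y‖ ≤ 2/r := by
  intro y hy
  rcases eq_or_ne y 0 with h | h
  · simp [h]; positivity
  · have hny : (0:ℝ) < ‖y‖ := norm_pos_iff.2 h
    set x : E n := (r/2) • ‖y‖⁻¹ • y with hx
    have hxK : x ∈ K := by
      apply hball
      rw [Metric.mem_ball, dist_zero_right, hx, norm_smul, norm_smul, norm_inv, norm_norm]
      rw [inv_mul_cancel₀ hny.ne']
      simp [abs_of_pos hr, abs_of_pos (half_pos hr)]
      linarith
    have := hy x hxK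
    rw [dot_eq_inner', hx, real_inner_smul_right, real_inner_smul_right,
      real_inner_self_eq_norm_sq] at this
    have heq : r/2 * (‖y‖⁻¹ * ‖y‖^2) = r/2 * ‖y‖ := by
      field_simp
    rw [heq] at this
    rw [le_div_iff₀ hr]
    nlinarith

private lemma polar_isCompact' {n : ℕ} {K : Set (E n)} {r : ℝ} (hr : 0 < r)
    (hball : Metric.ball (0 : E n) r ⊆ K) : IsCompact (polar K) := by
  apply Metric.isCompact_of_isClosed_isBounded (polar_isClosed' K)
  exact (isBounded_iff_forall_norm_le).2 ⟨2/r, polar_bounded' hr hball⟩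

private lemma exists_orth_unit' {n : ℕ} {K : Set (E n)}
    (hrec : affineSpan ℝ (recCone K) ≠ ⊤) :
    ∃ a : E n, ‖a‖ = 1 ∧ ∀ d ∈ recCone K, ⟪d, a⟫ = 0 := by
  have h0rec : (0 : E n) ∈ recCone K := by
    intro x hx t ht; simpa using hx
  have hspan : Submodule.span ℝ (recCone K) ≠ ⊤ := by
    intro h
    apply hrec
    rw [AffineSubspace.affineSpan_eq_top_iff_vectorSpan_eq_top_of_nonempty ℝ _ _ ⟨0, h0rec⟩]
    rw [eq_top_iff, ← h]
    apply Submodule.span_le.2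
    intro d hd
    have hsub : d - 0 ∈ recCone K -ᵥ recCone K := Set.sub_mem_sub hd h0rec
    have hmem : d - 0 ∈ vectorSpan ℝ (recCone K) := by
      rw [vectorSpan_def]; exact Submodule.subset_span (by simpa using hsub)
    simpa using hmem
  have horth : (Submodule.span ℝ (recCone K))ᗮ ≠ ⊥ := by
    intro h
    exact hspan (Submodule.orthogonal_eq_bot_iff.1 h)
  obtain ⟨a', ha', hne⟩ := Submodule.exists_mem_ne_zero_of_ne_bot horth
  refine ⟨‖a'‖⁻¹ • a', ?_, ?_⟩
  · rw [norm_smul, norm_inv, norm_norm, inv_mul_cancel₀ (norm_ne_zero_iff.2 hne)]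
  · intro d hd
    have := (Submodule.mem_orthogonal _ a').1 ha' d (Submodule.subset_span hd)
    rw [real_inner_smul_right, this, mul_zero]

private lemma khat_sup' {n : ℕ} {K : Set (E n)} (hcl : IsClosed K) (hconv : Convex ℝ K)
    (h0 : (0 : E n) ∈ interior K) (hrec : affineSpan ℝ (recCone K) ≠ ⊤) :
    ∀ c z : E n, z ∈ polar K → ∀ ε : ℝ, 0 < ε → ∃ y ∈ Khat K, ⟪c, z⟫ - ε < ⟪c, y⟫ := by
  intro c z hz ε hε
  have h0K : (0:E n) ∈ K := interior_subset h0
  obtain ⟨r, hr, hball⟩ := Metric.mem_nhds_iff.1 (mem_interior_iff_mem_nhds.1 h0)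
  have hbip := bipolar' K hcl hconv h0K
  have hcomp := polar_isCompact' hr hball
  have hPne : (polar K).Nonempty := ⟨0, zero_mem_polar' K⟩
  set M : ℝ := 2/r with hMdef
  have hM : 0 < M := by positivity
  have hMb : ∀ y ∈ polar K, ‖y‖ ≤ M := polar_bounded' hr hball
  obtain ⟨a, ha1, haorth⟩ := exists_orth_unit' hrec
  set s : ℝ := if 0 ≤ ⟪a, c⟫ then 1 else -1 with hsdef
  have hs : s = 1 ∨ s = -1 := by
    rw [hsdef]; split <;> simp
  set l : ℝ := ε/(2*M+2) with hldef
  have hl : 0 < l := by positivity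
  set r' : E n := c + (s*l) • a with hr'def
  have har'c : ⟪a, r'⟫ = ⟪a, c⟫ + s*l := by
    rw [hr'def, inner_add_right, real_inner_smul_right, real_inner_self_eq_norm_sq, ha1]
    ring
  have har' : ⟪a, r'⟫ ≠ 0 := by
    rw [har'c, hsdef]
    split
    · rename_i hac
      have : (0:ℝ) < ⟪a, c⟫ + 1 * l := by linarith
      linarith
    · rename_i hac
      push_neg at hac
      have : ⟪a, c⟫ + (-1) * l < 0 := by linarith
      linarith
  have hcont : ContinuousOn (fun y : E n => ⟪r', y⟫) (polar K) :=
    (Continuous.inner continuous_const continuous_id).continuousOn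
  obtain ⟨ys, hysP, hmax⟩ := hcomp.exists_isMaxOn hPne hcont
  have hmax' : ∀ y ∈ polar K, ⟪r', y⟫ ≤ ⟪r', ys⟫ := fun y hy => hmax hy
  set γ : ℝ := ⟪r', ys⟫ with hγdef
  have hγpos : 0 < γ := by
    by_contra hγ
    push_neg at hγ
    have hray : ∀ t : ℝ, 0 ≤ t → t • r' ∈ K := by
      intro t ht
      rw [← hbip]
      intro y hy
      rw [dot_eq_inner', real_inner_smul_left]
      have h1 : ⟪r', y⟫ ≤ 0 := le_trans (hmax' y hy) hγ
      nlinarith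
    have hrecm := ray_mem_recCone' hcl hconv hray
    exact har' (by rw [real_inner_comm]; exact haorth r' hrecm)
  have hysKhat : ys ∈ Khat K := by
    refine ⟨hysP, γ⁻¹ • r', ?_, ?_⟩
    · rw [← hbip]
      intro y hy
      rw [dot_eq_inner', real_inner_smul_left]
      have h1 : ⟪r', y⟫ ≤ γ := hmax' y hy
      have h2 : (0:ℝ) < γ⁻¹ := by positivity
      calc γ⁻¹ * ⟪r', y⟫ ≤ γ⁻¹ * γ := by nlinarith
        _ = 1 := inv_mul_cancel₀ hγpos.ne'
    · rw [dot_eq_inner', real_inner_smul_left, ← hγdef, inv_mul_cancel₀ hγpos.ne']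
  refine ⟨ys, hysKhat, ?_⟩
  have hay : |⟪a, ys⟫| ≤ M := by
    refine le_trans (abs_real_inner_le_norm a ys) ?_
    rw [ha1, one_mul]; exact hMb _ hysP
  have haz : |⟪a, z⟫| ≤ M := by
    refine le_trans (abs_real_inner_le_norm a z) ?_
    rw [ha1, one_mul]; exact hMb _ hz
  have hcy : ⟪r', ys⟫ = ⟪c, ys⟫ + s*l*⟪a, ys⟫ := by
    rw [hr'def, inner_add_left, real_inner_smul_left]
  have hrz : ⟪r', z⟫ = ⟪c, z⟫ + s*l*⟪a, z⟫ := by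
    rw [hr'def, inner_add_left, real_inner_smul_left]
  have hge : ⟪r', z⟫ ≤ γ := hmax' z hz
  have hlM : 2*l*M < ε := by
    have hle : l * (2*M+2) = ε := by rw [hldef]; field_simp
    nlinarith
  have hay' := abs_le.1 hay
  have haz' := abs_le.1 haz
  have b1 : l * ⟪a, ys⟫ ≤ l * M := mul_le_mul_of_nonneg_left hay'.2 hl.le
  have b2 : l * (-M) ≤ l * ⟪a, ys⟫ := mul_le_mul_of_nonneg_left hay'.1 hl.le
  have b3 : l * ⟪a, z⟫ ≤ l * M := mul_le_mul_of_nonneg_left haz'.2 hl.le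
  have b4 : l * (-M) ≤ l * ⟪a, z⟫ := mul_le_mul_of_nonneg_left haz'.1 hl.le
  have hge' : ⟪r', z⟫ ≤ ⟪r', ys⟫ := le_trans hge (le_of_eq hγdef)
  rcases hs with hs | hs <;> rw [hs] at hcy hrz <;> rw [hcy, hrz] at hge' <;> nlinarith

/-- If K is closed convex with 0 in its interior and rec(K) is not
full-dimensional, then cl(conv(K̂)) = K*. -/
theorem stmt_16 {n : ℕ} (K : Set (E n)) (hcl : IsClosed K) (hconv : Convex ℝ K)
    (h0 : (0 : E n) ∈ interior K)
    (hrec : affineSpan ℝ (recCone K) ≠ ⊤) :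
    closure (convexHull ℝ (Khat K)) = polar K := by
  apply Set.Subset.antisymm
  · have h1 : Khat K ⊆ polar K := fun y hy => hy.1
    have h2 : convexHull ℝ (Khat K) ⊆ polar K := convexHull_min h1 (polar_convex' K)
    exact closure_minimal h2 (polar_isClosed' K)
  · intro y0 hy0
    by_contra hC
    obtain ⟨f, u, hfu, hux⟩ := geometric_hahn_banach_closed_point
      ((convex_convexHull ℝ _).closure) isClosed_closure hC
    set c := (InnerProductSpace.toDual ℝ (E n)).symm f with hc
    have hcf : ∀ z : E n, ⟪c, z⟫ = f z := fun z => InnerProductSpace.toDual_symm_apply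
    have hε : 0 < ⟪c, y0⟫ - u := by rw [hcf]; linarith
    obtain ⟨y, hyK, hlt⟩ := khat_sup' hcl hconv h0 hrec c y0 hy0 _ hε
    have hyC : y ∈ closure (convexHull ℝ (Khat K)) :=
      subset_closure (subset_convexHull ℝ _ hyK)
    have hfy := hfu y hyC
    rw [← hcf] at hfy
    linarith
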